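/- Let L, σ², B, ε, τ, h > 0 and n ≥ 1. Define T_Local = min{ √(τ h L σ² B⁴/ε³) + h(L B²/ε + σ² B²/(n ε²)), h(L B²/ε + σ² B²/ε²) } and T_MB = min{ τ L B²/ε + h(L B²/ε + σ² B²/(n ε²)), h(L B²/ε + σ² B²/ε²) }. Then T_Local ≥ (1/2) · T_MB (in fact T_Local ≥ T_MB up to constant factor; prove T_Local ≥ c · T_MB for c = 1/2). -/

import Mathlib

theorem local_sgd_time_ge_minibatch_time (L σ2 B ε τ h : ℝ) (n : ℕ)
    (hL : 0 < L) (hσ2 : 0 < σ2) (hB : 0 < B) (hε : 0 < ε) (hτ : 0 < τ) (hh : 0 < h)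
    (hn : 1 ≤ n) :
    let T_Local := min (Real.sqrt (τ * h * L * σ2 * B ^ 4 / ε ^ 3)
        + h * (L * B ^ 2 / ε + σ2 * B ^ 2 / (n * ε ^ 2)))
      (h * (L * B ^ 2 / ε + σ2 * B ^ 2 / ε ^ 2))
    let T_MB := min (τ * L * B ^ 2 / ε + h * (L * B ^ 2 / ε + σ2 * B ^ 2 / (n * ε ^ 2)))
      (h * (L * B ^ 2 / ε + σ2 * B ^ 2 / ε ^ 2))
    T_Local ≥ (1 / 2) * T_MB := by
  intro T_Local T_MB
  have hn' : (0:ℝ) < n := by exact_mod_cast lt_of_lt_of_le one_pos hn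
  set a := τ * L * B ^ 2 / ε with ha
  set b := h * σ2 * B ^ 2 / ε ^ 2 with hb
  have ha0 : 0 < a := by positivity
  have hb0 : 0 < b := by positivity
  have hab : τ * h * L * σ2 * B ^ 4 / ε ^ 3 = a * b := by
    rw [ha, hb]; field_simp
  have hsq : min a b ≤ Real.sqrt (τ * h * L * σ2 * B ^ 4 / ε ^ 3) := by
    rw [hab, Real.le_sqrt (le_min ha0.le hb0.le) (by positivity)]
    rcases le_total a b with hle | hle
    · rw [min_eq_left hle]; nlinarith
    · rw [min_eq_right hle]; nlinarith
  have hA : 0 ≤ h * (L * B ^ 2 / ε + σ2 * B ^ 2 / (n * ε ^ 2)) := by positivity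
  have key : T_MB ≤ T_Local := by
    rcases le_total a b with hle | hle
    · rw [min_eq_left hle] at hsq
      exact min_le_min (by linarith) le_rfl
    · rw [min_eq_right hle] at hsq
      have hC : h * (L * B ^ 2 / ε + σ2 * B ^ 2 / ε ^ 2)
          ≤ Real.sqrt (τ * h * L * σ2 * B ^ 4 / ε ^ 3)
            + h * (L * B ^ 2 / ε + σ2 * B ^ 2 / (n * ε ^ 2)) := by
        have h1 : h * (L * B ^ 2 / ε + σ2 * B ^ 2 / (↑n * ε ^ 2))
            = h * L * B ^ 2 / ε + h * (σ2 * B ^ 2 / (↑n * ε ^ 2)) := by ring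
        have h1' : 0 ≤ h * (σ2 * B ^ 2 / (↑n * ε ^ 2)) := by positivity
        have h2 : h * (L * B ^ 2 / ε + σ2 * B ^ 2 / ε ^ 2) = h * L * B ^ 2 / ε + b := by
          rw [hb]; ring
        linarith
      calc T_MB ≤ h * (L * B ^ 2 / ε + σ2 * B ^ 2 / ε ^ 2) := min_le_right _ _
        _ ≤ T_Local := le_min hC le_rfl
  have hTMB : 0 ≤ T_MB := le_min (by positivity) (by positivity)
  linarith
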